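/- (Derivative of the f(x)=x² modified Hamiltonian in β = 1/α) For H(y) > c and β > 0, d/dβ [ (1/√(1/β)) · ... ] gives -d/dβ H^f_β(y) = (H(y)-c)/(2(H(y)-c)² + 2β) - arctan(√(1/β)(H(y)-c))/(2√β), and this quantity satisfies the bounds -π/(4√β) ≤ -d/dβ H^f_β(y) ≤ (H_max - H_min)/(2β). -/

import Mathlib

lemma key_deriv (a β : ℝ) (hβ : 0 < β) :
    HasDerivAt (fun b : ℝ => Real.sqrt b * Real.arctan (a / Real.sqrt b))
      (Real.arctan (a / Real.sqrt β) / (2 * Real.sqrt β) - a / (2 * (β + a ^ 2))) β := by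
  have hs : 0 < Real.sqrt β := Real.sqrt_pos.mpr hβ
  have h1 : HasDerivAt Real.sqrt (1 / (2 * Real.sqrt β)) β := Real.hasDerivAt_sqrt hβ.ne'
  have h2 : HasDerivAt (fun b : ℝ => a / Real.sqrt b)
      (a * (-(1 / (2 * Real.sqrt β)) / (Real.sqrt β) ^ 2)) β := by
    simpa [div_eq_mul_inv] using (h1.inv hs.ne').const_mul a
  have h3 := (Real.hasDerivAt_arctan (a / Real.sqrt β)).comp β h2
  have h4 := h1.mul h3
  refine h4.congr_deriv ?_
  have hsq : Real.sqrt β ^ 2 = β := Real.sq_sqrt hβ.le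
  have h5 : 1 + (a / Real.sqrt β) ^ 2 = (β + a ^ 2) / β := by
    field_simp
    rw [hsq]
    ring
  rw [h5]
  have hba : β + a ^ 2 > 0 := by positivity
  field_simp
  ring_nf
  simp only [Function.comp_apply, hsq]
  ring

theorem quadratic_modified_hamiltonian_beta_derivative
    (Hy Hmax Hmin c : ℝ) (hc : Hmin ≤ c) (hy : c < Hy) (hmax : Hy ≤ Hmax)
    (β : ℝ) (hβ : 0 < β) :
    -(deriv (fun b : ℝ => c - Hmin + Real.sqrt b * Real.arctan ((Hy - c) / Real.sqrt b)) β)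
      = (Hy - c) / (2 * (Hy - c) ^ 2 + 2 * β)
        - Real.arctan (Real.sqrt (1 / β) * (Hy - c)) / (2 * Real.sqrt β) ∧
    -(Real.pi / (4 * Real.sqrt β))
      ≤ -(deriv (fun b : ℝ => c - Hmin + Real.sqrt b * Real.arctan ((Hy - c) / Real.sqrt b)) β) ∧
    -(deriv (fun b : ℝ => c - Hmin + Real.sqrt b * Real.arctan ((Hy - c) / Real.sqrt b)) β)
      ≤ (Hmax - Hmin) / (2 * β) := by
  set a := Hy - c with ha_def
  have ha : 0 < a := sub_pos.mpr hy
  have hs : 0 < Real.sqrt β := Real.sqrt_pos.mpr hβ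
  have hD : deriv (fun b : ℝ => c - Hmin + Real.sqrt b * Real.arctan (a / Real.sqrt b)) β
      = Real.arctan (a / Real.sqrt β) / (2 * Real.sqrt β) - a / (2 * (β + a ^ 2)) :=
    ((key_deriv a β hβ).const_add (c - Hmin)).deriv
  rw [hD]
  have hrw : Real.sqrt (1 / β) * a = a / Real.sqrt β := by
    rw [one_div, Real.sqrt_inv, div_eq_mul_inv, mul_comm]
  refine ⟨by rw [hrw]; ring, ?_, ?_⟩
  · have h1 : Real.arctan (a / Real.sqrt β) / (2 * Real.sqrt β)
        ≤ (Real.pi / 2) / (2 * Real.sqrt β) := by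
      gcongr
      exact (Real.arctan_lt_pi_div_two _).le
    have h2 : 0 ≤ a / (2 * (β + a ^ 2)) := by positivity
    have : (Real.pi / 2) / (2 * Real.sqrt β) = Real.pi / (4 * Real.sqrt β) := by ring
    linarith
  · have h1 : 0 ≤ Real.arctan (a / Real.sqrt β) / (2 * Real.sqrt β) := by
      have h0 : (0:ℝ) ≤ Real.arctan (a / Real.sqrt β) := by
        rw [← Real.arctan_zero]
        exact Real.arctan_strictMono.monotone (by positivity)
      positivity
    have h2 : a / (2 * (β + a ^ 2)) ≤ (Hmax - Hmin) / (2 * β) := by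
      have hab : a ≤ Hmax - Hmin := by linarith
      have hb : β ≤ β + a ^ 2 := by nlinarith [sq_nonneg a]
      gcongr
      linarith
    linarith
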